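/- Every ultrafilter satisfies the local pigeonhole principle (A4 mod U), and is therefore a coideal: Let U ⊆ ℕ^[∞] be an ultrafilter. Then for every A ∈ U, every finite a ⊆ A, and every set O of finite subsets of ℕ of size |a|+1, there exists B ∈ U ∩ [depth_A(a),A] such that {a ∪ {x} : x ∈ B, x greater than every element of a} is either contained in O or disjoint from O. -/

import Mathlib

open Set

/-- `ellR n A` : the set of the `n` least elements of `A ⊆ ℕ` (the approximation `rₙ(A)`). -/
noncomputable def ellR (n : ℕ) (A : Set ℕ) : Finset ℕ :=
  (Finset.range n).image (Nat.nth (· ∈ A))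

/-- `a ⊏ B` : the finite set `a` is an initial segment of `B`. -/
def IsInitSeg (a : Finset ℕ) (B : Set ℕ) : Prop :=
  ↑a ⊆ B ∧ ∀ x ∈ B, x ∉ a → ∀ y ∈ a, y < x

/-- The Ellentuck neighborhood `[a, A] = {B ∈ ℕ^[∞] : a ⊏ B ∧ B ⊆ A}`. -/
def ENbhd (a : Finset ℕ) (A : Set ℕ) : Set (Set ℕ) :=
  {B | B.Infinite ∧ IsInitSeg a B ∧ B ⊆ A}

/-- `[n, A] := [rₙ(A), A]`. -/
noncomputable def ENbhdN (n : ℕ) (A : Set ℕ) : Set (Set ℕ) :=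
  ENbhd (ellR n A) A

/-- `depth_A(a)` : the least `n` with `a ⊆ rₙ(A)`. -/
noncomputable def depth (A : Set ℕ) (a : Finset ℕ) : ℕ :=
  sInf {n | a ⊆ ellR n A}

/-- The one-step extensions of `a` inside `B`: the sets `a ∪ {x}` with `x ∈ B` greater
than every element of `a` (i.e. `r_{|a|+1}[a,B]`). -/
def oneStepExt (a : Finset ℕ) (B : Set ℕ) : Set (Finset ℕ) :=
  {b | ∃ x ∈ B, (∀ y ∈ a, y < x) ∧ b = insert x a}

/-- `H ⊆ ℕ^[∞]` is a coideal: upward closed, satisfies A3 mod H and A4 mod H. -/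
def IsCoideal (H : Set (Set ℕ)) : Prop :=
  (∀ A ∈ H, A.Infinite) ∧
  (∀ A ∈ H, ∀ B : Set ℕ, B.Infinite → A ⊆ B → B ∈ H) ∧
  (∀ A ∈ H, ∀ a : Finset ℕ, ↑a ⊆ A →
    (∀ B ∈ H ∩ ENbhdN (depth A a) A, (ENbhd a B).Nonempty) ∧
    (∀ B ∈ H, B ⊆ A → (ENbhd a B).Nonempty →
      ∃ A' ∈ H ∩ ENbhdN (depth A a) A,
        (ENbhd a A').Nonempty ∧ ENbhd a A' ⊆ ENbhd a B)) ∧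
  (∀ A ∈ H, ∀ a : Finset ℕ, ↑a ⊆ A → ∀ O : Set (Finset ℕ),
    ∃ B ∈ H ∩ ENbhdN (depth A a) A,
      oneStepExt a B ⊆ O ∨ oneStepExt a B ∩ O = ∅)

/-- `D` is dense open in `S` (with respect to `⊆`). -/
def DenseOpenIn (D S : Set (Set ℕ)) : Prop :=
  (∀ A ∈ S, ∃ B ∈ D, B ⊆ A) ∧ (∀ A ∈ S, ∀ B ∈ D, A ⊆ B → A ∈ D)

/-- `C` diagonalizes the family `{A_a}`: for every finite `a ⊆ C`, `[a,C] ⊆ [a,A_a]`. -/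
def Diagonalizes (C : Set ℕ) (Afam : Finset ℕ → Set ℕ) : Prop :=
  ∀ a : Finset ℕ, ↑a ⊆ C → ENbhd a C ⊆ ENbhd a (Afam a)

/-- `H` is a semiselective coideal. -/
def Semiselective (H : Set (Set ℕ)) : Prop :=
  IsCoideal H ∧
  ∀ A ∈ H, ∀ Dfam : Finset ℕ → Set (Set ℕ),
    (∀ a : Finset ℕ, ↑a ⊆ A → DenseOpenIn (Dfam a) (H ∩ ENbhdN (depth A a) A)) →
    ∀ B ∈ H, B ⊆ A →
      ∃ C ∈ H, C ⊆ B ∧ ∃ Afam : Finset ℕ → Set ℕ,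
        (∀ a : Finset ℕ, ↑a ⊆ A → Afam a ∈ Dfam a) ∧ Diagonalizes C Afam

/-- `X` is `H`-Ramsey. -/
def HRamsey (H X : Set (Set ℕ)) : Prop :=
  ∀ a : Finset ℕ, ∀ A ∈ H, (ENbhd a A).Nonempty →
    ∃ B ∈ ENbhd a A ∩ H, ENbhd a B ⊆ X ∨ ENbhd a B ∩ X = ∅

/-- `X` is `H`-Ramsey null. -/
def HRamseyNull (H X : Set (Set ℕ)) : Prop :=
  ∀ a : Finset ℕ, ∀ A ∈ H, (ENbhd a A).Nonempty →
    ∃ B ∈ ENbhd a A ∩ H, ENbhd a B ∩ X = ∅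

/-- `X` is `H`-Baire. -/
def HBaire (H X : Set (Set ℕ)) : Prop :=
  ∀ a : Finset ℕ, ∀ A ∈ H, (ENbhd a A).Nonempty →
    ∃ (b : Finset ℕ) (B : Set ℕ), B ∈ H ∧ (ENbhd b B).Nonempty ∧
      ENbhd b B ⊆ ENbhd a A ∧ (ENbhd b B ⊆ X ∨ ENbhd b B ∩ X = ∅)

/-- `X` is `H`-meager. -/
def HMeager (H X : Set (Set ℕ)) : Prop :=
  ∀ a : Finset ℕ, ∀ A ∈ H, (ENbhd a A).Nonempty →
    ∃ (b : Finset ℕ) (B : Set ℕ), B ∈ H ∧ (ENbhd b B).Nonempty ∧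
      ENbhd b B ⊆ ENbhd a A ∧ ENbhd b B ∩ X = ∅

/-- `Exp(H) = {[n,A] : n ∈ ℕ, A ∈ H}`. -/
def ExpH (H : Set (Set ℕ)) : Set (Set (Set ℕ)) :=
  {S | ∃ (n : ℕ) (A : Set ℕ), A ∈ H ∧ S = ENbhdN n A}

/-- `X` is `Exp(H)`-nowhere dense. -/
def ExpNwd (H X : Set (Set ℕ)) : Prop :=
  ∀ S ∈ ExpH H, ∃ T ∈ ExpH H, T ⊆ S ∧ T ∩ X = ∅

/-- Combinatorial forcing: `A` accepts `a` (relative to `H` and `F`). -/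
def Accepts (H : Set (Set ℕ)) (F : Set (Finset ℕ)) (A : Set ℕ) (a : Finset ℕ) : Prop :=
  ∀ B ∈ H ∩ ENbhdN (depth A a) A, ∃ n : ℕ, ellR n B ∈ F

/-- Combinatorial forcing: `A` rejects `a` (relative to `H` and `F`). -/
def Rejects (H : Set (Set ℕ)) (F : Set (Finset ℕ)) (A : Set ℕ) (a : Finset ℕ) : Prop :=
  ∀ B ∈ H ∩ ENbhdN (depth A a) A, ¬ Accepts H F B a

/-- `A ≤* B` : `A` is an almost-reduction of `B`. -/
def AlmostRed (A B : Set ℕ) : Prop :=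
  ∃ a : Finset ℕ, ↑a ⊆ A ∧ ENbhd a A ⊆ ENbhd a B

/-- `D ⊆ H` is dense open in the preorder `(H, ≤*)`. -/
def DenseOpenStar (H D : Set (Set ℕ)) : Prop :=
  D ⊆ H ∧ (∀ A ∈ H, ∃ B ∈ D, AlmostRed B A) ∧
  (∀ A ∈ H, ∀ B ∈ D, AlmostRed A B → A ∈ D)

/-- The family `{A_a}` is filtered by `⊆` (indexed by the finite subsets of `A`). -/
def FilteredFamily (A : Set ℕ) (Afam : Finset ℕ → Set ℕ) : Prop :=
  ∀ a b : Finset ℕ, ↑a ⊆ A → ↑b ⊆ A →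
    ∃ c : Finset ℕ, ↑c ⊆ A ∧ Afam c ⊆ Afam a ∧ Afam c ⊆ Afam b

/-- `H` is a selective coideal. -/
def SelectiveCoideal (H : Set (Set ℕ)) : Prop :=
  IsCoideal H ∧
  ∀ A ∈ H, ∀ Afam : Finset ℕ → Set ℕ,
    (∀ a : Finset ℕ, ↑a ⊆ A → Afam a ∈ H ∧ Afam a ⊆ A ∧ (ENbhd a (Afam a)).Nonempty) →
    FilteredFamily A Afam →
    ∃ B ∈ H, B ⊆ A ∧ Diagonalizes B Afam

/-- `U ⊆ ℕ^[∞]` is a filter on `(ℕ^[∞], ⊆)`. -/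
def IsEFilter (U : Set (Set ℕ)) : Prop :=
  (∀ A ∈ U, A.Infinite) ∧
  (∀ A ∈ U, ∀ B : Set ℕ, B.Infinite → A ⊆ B → B ∈ U) ∧
  (∀ A ∈ U, ∀ B ∈ U, ∀ a : Finset ℕ,
    (ENbhd a A).Nonempty → (ENbhd a B).Nonempty →
      ∃ C ∈ U, C ∈ ENbhd a A ∩ ENbhd a B)

/-- `U` is an ultrafilter: a maximal filter satisfying A3 mod U. -/
def IsEUltrafilter (U : Set (Set ℕ)) : Prop :=
  IsEFilter U ∧
  (∀ U' : Set (Set ℕ), IsEFilter U' → U ⊆ U' → U' = U) ∧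
  (∀ A ∈ U, ∀ a : Finset ℕ, ↑a ⊆ A →
    (∀ B ∈ U ∩ ENbhdN (depth A a) A, (ENbhd a B).Nonempty) ∧
    (∀ B ∈ U, B ⊆ A → (ENbhd a B).Nonempty →
      ∃ A' ∈ U ∩ ENbhdN (depth A a) A,
        (ENbhd a A').Nonempty ∧ ENbhd a A' ⊆ ENbhd a B))

/-- `U` is a selective ultrafilter. -/
def SelectiveUltrafilter (U : Set (Set ℕ)) : Prop :=
  IsEUltrafilter U ∧
  ∀ A ∈ U, ∀ Afam : Finset ℕ → Set ℕ,
    (∀ a : Finset ℕ, ↑a ⊆ A → Afam a ∈ U ∧ Afam a ⊆ A ∧ (ENbhd a (Afam a)).Nonempty) →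
    FilteredFamily A Afam →
    ∃ B ∈ U, B ⊆ A ∧ Diagonalizes B Afam

/-- The conditions of the Mathias poset `M_U` : pairs `(a, A)` with `A ∈ U`, `[a,A] ≠ ∅`. -/
def MathiasCond (U : Set (Set ℕ)) : Set (Finset ℕ × Set ℕ) :=
  {p | p.2 ∈ U ∧ (ENbhd p.1 p.2).Nonempty}

/-- `D` is a dense open subset of the Mathias poset `M_U`
(ordered by `(a,A) ≤ (b,B) ↔ [a,A] ⊆ [b,B]`). -/
def MathiasDenseOpen (U : Set (Set ℕ)) (D : Set (Finset ℕ × Set ℕ)) : Prop :=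
  D ⊆ MathiasCond U ∧
  (∀ p ∈ MathiasCond U, ∃ q ∈ D, ENbhd q.1 q.2 ⊆ ENbhd p.1 p.2) ∧
  (∀ p ∈ MathiasCond U, ∀ q ∈ D, ENbhd p.1 p.2 ⊆ ENbhd q.1 q.2 → p ∈ D)

/-- `A` captures `(a, D)`. -/
def Captures (U : Set (Set ℕ)) (D : Set (Finset ℕ × Set ℕ))
    (a : Finset ℕ) (A : Set ℕ) : Prop :=
  A ∈ U ∧ (ENbhd a A).Nonempty ∧
  ∀ B ∈ ENbhd a A, ∃ m : ℕ, m > a.card ∧ (ellR m B, A) ∈ D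


section Aux

lemma ellR_mono {A : Set ℕ} {n m : ℕ} (h : n ≤ m) : ellR n A ⊆ ellR m A :=
  Finset.image_subset_image (Finset.range_subset_range.2 h)

lemma ellR_subset {A : Set ℕ} (hA : A.Infinite) (n : ℕ) : ↑(ellR n A) ⊆ A := by
  intro x hx
  simp only [ellR, Finset.coe_image, Set.mem_image, Finset.mem_coe,
    Finset.mem_range] at hx
  obtain ⟨i, _, rfl⟩ := hx
  exact Nat.nth_mem_of_infinite (by simpa using hA) i

lemma subset_ellR_depth {A : Set ℕ} (hA : A.Infinite) {a : Finset ℕ}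
    (ha : ↑a ⊆ A) : a ⊆ ellR (depth A a) A := by
  classical
  have hne : {n | a ⊆ ellR n A}.Nonempty := by
    refine ⟨(a.sup fun x => Nat.count (· ∈ A) x) + 1, ?_⟩
    intro x hx
    have hxA : x ∈ A := ha hx
    have : Nat.nth (· ∈ A) (Nat.count (· ∈ A) x) = x := Nat.nth_count hxA
    simp only [ellR, Finset.mem_image, Finset.mem_range]
    exact ⟨Nat.count (· ∈ A) x, Nat.lt_succ_of_le (Finset.le_sup hx), this⟩
  exact Nat.sInf_mem hne

lemma not_all_lt_of_mem_ellR_depth {A : Set ℕ} (hA : A.Infinite) {a : Finset ℕ}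
    (ha : ↑a ⊆ A) {x : ℕ} (hx : x ∈ ellR (depth A a) A) :
    ¬ (∀ y ∈ a, y < x) := by
  classical
  have hAs : {x | x ∈ A}.Infinite := by simpa using hA
  set d := depth A a with hd
  rcases Nat.eq_zero_or_pos d with h0 | hpos
  · rw [h0] at hx
    simp [ellR] at hx
  · -- d - 1 is not in the set, so a ⊄ ellR (d-1) A
    have hnm : ¬ a ⊆ ellR (d - 1) A := by
      intro hsub
      have : d - 1 ∈ {n | a ⊆ ellR n A} := hsub
      exact Nat.notMem_of_lt_sInf (Nat.sub_lt hpos one_pos) this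
    obtain ⟨z, hz, hznm⟩ := Finset.not_subset.1 hnm
    have hzd : z ∈ ellR d A := subset_ellR_depth hA ha hz
    -- z = nth (d-1)
    simp only [ellR, Finset.mem_image, Finset.mem_range] at hzd hznm hx
    obtain ⟨j, hj, hjz⟩ := hzd
    have hjd : j = d - 1 := by
      by_contra hne
      exact hznm ⟨j, by omega, hjz⟩
    obtain ⟨i, hi, hix⟩ := hx
    have : Nat.nth (· ∈ A) i ≤ Nat.nth (· ∈ A) j :=
      Nat.nth_monotone hAs (by omega)
    intro hall
    have := hall z hz
    omega

/-- Key maximality lemma: if every member of `U` meets `Z` in an infinite set,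
then any infinite set containing some `(C ∩ Z) \ f` with `C ∈ U`, `f` finite,
belongs to `U`. -/
lemma ultra_mem_of_inter (U : Set (Set ℕ)) (hU : IsEUltrafilter U) (Z : Set ℕ)
    (hZ : ∀ D ∈ U, (D ∩ Z).Infinite) :
    ∀ C ∈ U, ∀ f : Finset ℕ, ∀ B : Set ℕ, B.Infinite →
      (C ∩ Z) \ ↑f ⊆ B → B ∈ U := by
  set U' : Set (Set ℕ) :=
    {B | B.Infinite ∧ ∃ C ∈ U, ∃ f : Finset ℕ, (C ∩ Z) \ ↑f ⊆ B} with hU'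
  have hsub : U ⊆ U' := by
    intro C hC
    exact ⟨hU.1.1 C hC, C, hC, ∅, fun x hx => hx.1.1⟩
  have hempty_init : ∀ C : Set ℕ, IsInitSeg (∅ : Finset ℕ) C := by
    intro C
    exact ⟨by simp, fun x _ _ y hy => absurd hy (by simp)⟩
  have hfil : IsEFilter U' := by
    refine ⟨fun B hB => hB.1, ?_, ?_⟩
    · rintro B ⟨hBi, C, hC, f, hf⟩ B' hB'i hBB'
      exact ⟨hB'i, C, hC, f, hf.trans hBB'⟩
    · rintro A' ⟨hA'i, C₁, hC₁, f₁, hf₁⟩ B' ⟨hB'i, C₂, hC₂, f₂, hf₂⟩ g hgA' hgB'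
      -- g ⊆ A' and g ⊆ B'
      obtain ⟨W, hWi, ⟨hgW, _⟩, hWA'⟩ := hgA'
      obtain ⟨W', hW'i, ⟨hgW', _⟩, hW'B'⟩ := hgB'
      have hgA'' : ↑g ⊆ A' := hgW.trans hWA'
      have hgB'' : ↑g ⊆ B' := hgW'.trans hW'B'
      -- get C ∈ U with C ⊆ C₁ ∩ C₂
      obtain ⟨C, hCU, hCC₁, hCC₂⟩ := hU.1.2.2 C₁ hC₁ C₂ hC₂ ∅
        ⟨C₁, hU.1.1 C₁ hC₁, hempty_init C₁, le_refl _⟩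
        ⟨C₂, hU.1.1 C₂ hC₂, hempty_init C₂, le_refl _⟩
      have hCsub₁ : C ⊆ C₁ := hCC₁.2.2
      have hCsub₂ : C ⊆ C₂ := hCC₂.2.2
      set n := g.sup id with hn
      set ff : Finset ℕ := f₁ ∪ f₂ ∪ Finset.range (n + 1) with hff
      set D : Set ℕ := ↑g ∪ ((C ∩ Z) \ ↑ff) with hD
      have hDi : D.Infinite :=
        (((hZ C hCU).diff (ff.finite_toSet)).mono Set.subset_union_right)
      have hgD : ↑g ⊆ D := Set.subset_union_left
      have hDinit : IsInitSeg g D := by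
        refine ⟨hgD, ?_⟩
        intro x hx hxg y hy
        rcases hx with hx | hx
        · exact absurd hx hxg
        · have hxff : x ∉ ff := hx.2
          have : x ∉ Finset.range (n + 1) := fun h => hxff (by
            simp only [hff, Finset.mem_union]; right; exact h)
          have hxn : n + 1 ≤ x := by
            have h' := Finset.mem_range.not.1 this; omega
          have : y ≤ n := Finset.le_sup (f := id) hy
          omega
      have hDsub : ∀ {E : Set ℕ} (_ : ↑g ⊆ E) {Cb : Set ℕ} {fb : Finset ℕ}
          (_ : C ⊆ Cb) (_ : fb ⊆ ff) (_ : (Cb ∩ Z) \ ↑fb ⊆ E), D ⊆ E := by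
        intro E hgE Cb fb hCb hfb hE
        intro x hx
        rcases hx with hx | hx
        · exact hgE hx
        · exact hE ⟨⟨hCb hx.1.1, hx.1.2⟩, fun h => hx.2 (hfb h)⟩
      refine ⟨D, ⟨hDi, C, hCU, ff, Set.subset_union_right⟩, ?_, ?_⟩
      · exact ⟨hDi, hDinit, hDsub hgA'' hCsub₁ (Finset.subset_union_left.trans Finset.subset_union_left) hf₁⟩
      · exact ⟨hDi, hDinit, hDsub hgB'' hCsub₂ (Finset.subset_union_right.trans Finset.subset_union_left) hf₂⟩
  have heq : U' = U := hU.2.1 U' hfil hsub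
  intro C hC f B hBi hBsub
  rw [← heq]
  exact ⟨hBi, C, hC, f, hBsub⟩

end Aux

/-- Every ultrafilter satisfies the local pigeonhole principle (A4 mod U). -/
theorem ultrafilter_A4 (U : Set (Set ℕ)) (hU : IsEUltrafilter U)
    (A : Set ℕ) (hA : A ∈ U) (a : Finset ℕ) (ha : ↑a ⊆ A)
    (O : Set (Finset ℕ)) (hO : ∀ b ∈ O, b.card = a.card + 1) :
    ∃ B ∈ U ∩ ENbhdN (depth A a) A,
      oneStepExt a B ⊆ O ∨ oneStepExt a B ∩ O = ∅ := by
  classical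
  have hAinf : A.Infinite := hU.1.1 A hA
  set d := depth A a with hd
  set M := (ellR d A).sup id with hM
  set X : Set ℕ := {x | (∀ y ∈ a, y < x) ∧ insert x a ∈ O} with hX
  -- general construction, given Z meets every member of U infinitely
  have key : ∀ Z : Set ℕ, (∀ D ∈ U, (D ∩ Z).Infinite) →
      ∃ B ∈ U ∩ ENbhdN d A,
        ∀ x ∈ B, (∀ y ∈ a, y < x) → x ∈ Z := by
    intro Z hZ
    set B : Set ℕ := ↑(ellR d A) ∪ ((A ∩ Z) \ ↑(Finset.range (M + 1))) with hB
    have hBi : B.Infinite :=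
      ((hZ A hA).diff ((Finset.range (M + 1)).finite_toSet)).mono
        Set.subset_union_right
    have hBU : B ∈ U :=
      ultra_mem_of_inter U hU Z hZ A hA (Finset.range (M + 1)) B hBi
        Set.subset_union_right
    have hBsubA : B ⊆ A := by
      intro x hx
      rcases hx with hx | hx
      · exact ellR_subset hAinf d hx
      · exact hx.1.1
    have hinit : IsInitSeg (ellR d A) B := by
      refine ⟨Set.subset_union_left, ?_⟩
      intro x hx hxe y hy
      rcases hx with hx | hx
      · exact absurd hx hxe
      · have : x ∉ Finset.range (M + 1) := hx.2
        have hxM : M + 1 ≤ x := by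
          by_contra h
          exact this (Finset.mem_range.2 (by omega))
        have : y ≤ M := Finset.le_sup (f := id) hy
        omega
    refine ⟨B, ⟨hBU, hBi, hinit, hBsubA⟩, ?_⟩
    intro x hx hlt
    rcases hx with hx | hx
    · exact absurd hlt (not_all_lt_of_mem_ellR_depth hAinf ha hx)
    · exact hx.1.2
  by_cases hcase : ∀ D ∈ U, (D ∩ X).Infinite
  · obtain ⟨B, hBmem, hBprop⟩ := key X hcase
    refine ⟨B, hBmem, Or.inl ?_⟩
    rintro b ⟨x, hxB, hlt, rfl⟩
    exact (hBprop x hxB hlt).2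
  · push_neg at hcase
    obtain ⟨D, hD, hDfin⟩ := hcase
    have hZ : ∀ D' ∈ U, (D' ∩ Xᶜ).Infinite := by
      intro D' hD'
      have hinit : ∀ C : Set ℕ, IsInitSeg (∅ : Finset ℕ) C :=
        fun C => ⟨by simp, fun x _ _ y hy => absurd hy (by simp)⟩
      obtain ⟨E, hEU, hE₁, hE₂⟩ := hU.1.2.2 D hD D' hD' ∅
        ⟨D, hU.1.1 D hD, hinit D, subset_rfl⟩
        ⟨D', hU.1.1 D' hD', hinit D', subset_rfl⟩
      have hEi : E.Infinite := hU.1.1 E hEU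
      have : (E \ (D ∩ X)).Infinite := hEi.diff hDfin
      refine this.mono ?_
      intro x hx
      refine ⟨hE₂.2.2 hx.1, fun hxX => hx.2 ⟨hE₁.2.2 hx.1, hxX⟩⟩
    obtain ⟨B, hBmem, hBprop⟩ := key Xᶜ hZ
    refine ⟨B, hBmem, Or.inr ?_⟩
    ext b
    simp only [Set.mem_inter_iff, Set.mem_empty_iff_false, iff_false, not_and]
    rintro ⟨x, hxB, hlt, rfl⟩ hbO
    exact hBprop x hxB hlt ⟨hlt, hbO⟩
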